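/- Let J be C², strictly concave with J(0)=J(1)=0 and maximizer m, and let ρ₋, ρ₊ ∈ [0,1]. Let ν be a probability measure on [0,1] such that ∫ Q(λ, ρ₋) dν(λ) ≤ 0 and ∫ Q(λ, ρ₊) dν(λ) ≥ 0 for the one-sided entropy fluxes Q(u,w₋) = (J(w₋∧m) − J(u))·1_{u < w₋∧m} and Q(u,w₊) = (J(u) − J(w₊∨m))·1_{u > w₊∨m}. Then ν is supported on the interval [ρ₋∧m, ρ₊∨m]. -/

import Mathlib

open Set MeasureTheory

theorem quasistatic_stmt16 (J : ℝ → ℝ) (hJ : ContDiff ℝ 2 J)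
    (hJ'' : ∀ u : ℝ, deriv (deriv J) u < 0) (h0 : J 0 = 0) (h1 : J 1 = 0)
    (m : ℝ) (hm : m ∈ Set.Ioo (0:ℝ) 1) (hmax : IsMaxOn J (Set.Icc 0 1) m)
    (ρm ρp : ℝ) (hρm : ρm ∈ Set.Icc (0:ℝ) 1) (hρp : ρp ∈ Set.Icc (0:ℝ) 1)
    (ν : Measure ℝ) [IsProbabilityMeasure ν]
    (hsupp : ν (Set.Icc (0:ℝ) 1)ᶜ = 0)
    (hneg : ∫ l, (if l < min ρm m then J (min ρm m) - J l else 0) ∂ν ≤ 0)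
    (hpos : 0 ≤ ∫ l, (if max ρp m < l then J l - J (max ρp m) else 0) ∂ν) :
    ν (Set.Icc (min ρm m) (max ρp m))ᶜ = 0 := by
  set a := min ρm m with ha_def
  set b := max ρp m with hb_def
  have ha0 : (0:ℝ) ≤ a := le_min hρm.1 hm.1.le
  have ham : a ≤ m := min_le_right _ _
  have hmb : m ≤ b := le_max_right _ _
  have hb1 : b ≤ 1 := max_le hρp.2 hm.2.le
  -- derivative facts
  have hJdiff : Differentiable ℝ J := hJ.differentiable (by norm_num)
  have hJ'cont : ContDiff ℝ 1 (deriv J) := by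
    have : (2 : WithTop ℕ∞) = 1 + 1 := by norm_num
    rw [this, contDiff_succ_iff_deriv] at hJ
    exact hJ.2.2
  have hJ'anti : StrictAnti (deriv J) := strictAnti_of_deriv_neg hJ''
  have hderivm : deriv J m = 0 := by
    have : IsLocalMax J m := hmax.isLocalMax (Icc_mem_nhds hm.1 hm.2)
    exact this.deriv_eq_zero
  have hmono : StrictMonoOn J (Iic m) := by
    apply strictMonoOn_of_deriv_pos (convex_Iic m) hJ.continuous.continuousOn
    intro x hx
    rw [interior_Iic] at hx
    have := hJ'anti hx
    rw [hderivm] at this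
    linarith
  have hanti : StrictAntiOn J (Ici m) := by
    apply strictAntiOn_of_deriv_neg (convex_Ici m) hJ.continuous.continuousOn
    intro x hx
    rw [interior_Ici] at hx
    have := hJ'anti hx
    rw [hderivm] at this
    linarith
  -- a.e. membership in [0,1]
  have hae : ∀ᵐ l ∂ν, l ∈ Set.Icc (0:ℝ) 1 := by
    rw [MeasureTheory.ae_iff]
    have : {l : ℝ | ¬ l ∈ Set.Icc (0:ℝ) 1} = (Set.Icc (0:ℝ) 1)ᶜ := rfl
    rw [this]; exact hsupp
  -- bound on J
  obtain ⟨C, hC⟩ := isCompact_Icc.exists_bound_of_continuousOn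
    (hJ.continuous.continuousOn : ContinuousOn J (Set.Icc (0:ℝ) 1))
  have hC0 : 0 ≤ C := le_trans (norm_nonneg _) (hC 0 (by constructor <;> norm_num))
  -- the two integrands
  set f : ℝ → ℝ := fun l => if l < a then J a - J l else 0 with hf_def
  set g : ℝ → ℝ := fun l => if b < l then J l - J b else 0 with hg_def
  have hfmeas : Measurable f := by
    apply Measurable.ite (measurableSet_Iio (a := a))
    · exact measurable_const.sub hJ.continuous.measurable
    · exact measurable_const
  have hgmeas : Measurable g := by
    apply Measurable.ite (measurableSet_Ioi (a := b))
    · exact hJ.continuous.measurable.sub measurable_const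
    · exact measurable_const
  have hfint : Integrable f ν := by
    apply Integrable.mono' (integrable_const (2 * C)) hfmeas.aestronglyMeasurable
    filter_upwards [hae] with l hl
    by_cases h : l < a
    · simp only [hf_def, if_pos h]
      have h1 : ‖J a‖ ≤ C := hC a ⟨ha0, le_trans ham hm.2.le⟩
      have h2 : ‖J l‖ ≤ C := hC l hl
      calc ‖J a - J l‖ ≤ ‖J a‖ + ‖J l‖ := norm_sub_le _ _
        _ ≤ 2 * C := by linarith
    · simp only [hf_def, if_neg h]; simpa using by linarith
  have hgint : Integrable g ν := by
    apply Integrable.mono' (integrable_const (2 * C)) hgmeas.aestronglyMeasurable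
    filter_upwards [hae] with l hl
    by_cases h : b < l
    · simp only [hg_def, if_pos h]
      have h1 : ‖J b‖ ≤ C := hC b ⟨le_trans hm.1.le hmb, hb1⟩
      have h2 : ‖J l‖ ≤ C := hC l hl
      calc ‖J l - J b‖ ≤ ‖J l‖ + ‖J b‖ := norm_sub_le _ _
        _ ≤ 2 * C := by linarith
    · simp only [hg_def, if_neg h]; simpa using by linarith
  -- pointwise sign
  have hfnn : ∀ l, 0 ≤ f l := by
    intro l
    simp only [hf_def]
    by_cases h : l < a
    · rw [if_pos h]
      have : J l < J a := hmono (le_of_lt (lt_of_lt_of_le h ham)) ham h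
      linarith
    · rw [if_neg h]
  have hgnp : ∀ l, g l ≤ 0 := by
    intro l
    simp only [hg_def]
    by_cases h : b < l
    · rw [if_pos h]
      have : J l < J b := hanti hmb (le_of_lt (lt_of_le_of_lt hmb h)) h
      linarith
    · rw [if_neg h]
  -- integrals are zero, hence a.e. zero
  have hfze : f =ᵐ[ν] 0 := by
    have h0' : ∫ l, f l ∂ν = 0 := le_antisymm hneg (integral_nonneg hfnn)
    exact (integral_eq_zero_iff_of_nonneg hfnn hfint).mp h0'
  have hgze : g =ᵐ[ν] 0 := by
    have hnn : ∀ l, 0 ≤ (-g) l := fun l => by simpa using hgnp l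
    have hint0 : ∫ l, g l ∂ν = 0 := le_antisymm (integral_nonpos hgnp) hpos
    have h0' : ∫ l, (-g) l ∂ν = 0 := by
      simp only [Pi.neg_apply, integral_neg, hint0, neg_zero]
    have := (integral_eq_zero_iff_of_nonneg hnn hgint.neg).mp h0'
    filter_upwards [this] with l hl
    simpa using hl
  have hIio : ν (Set.Iio a) = 0 := by
    have hsub : Set.Iio a ⊆ {l | f l ≠ 0} := by
      intro l hl
      rw [Set.mem_Iio] at hl
      simp only [Set.mem_setOf_eq, hf_def, if_pos hl]
      have : J l < J a := hmono (le_of_lt (lt_of_lt_of_le hl ham)) ham hl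
      intro h; linarith
    exact measure_mono_null hsub (by rw [← MeasureTheory.ae_iff] at *; exact hfze)
  have hIoi : ν (Set.Ioi b) = 0 := by
    have hsub : Set.Ioi b ⊆ {l | g l ≠ 0} := by
      intro l hl
      rw [Set.mem_Ioi] at hl
      simp only [Set.mem_setOf_eq, hg_def, if_pos hl]
      have : J l < J b := hanti hmb (le_of_lt (lt_of_le_of_lt hmb hl)) hl
      intro h; linarith
    exact measure_mono_null hsub (by rw [← MeasureTheory.ae_iff] at *; exact hgze)
  have hcompl : (Set.Icc a b)ᶜ = Set.Iio a ∪ Set.Ioi b := by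
    ext x
    simp only [Set.mem_compl_iff, Set.mem_Icc, Set.mem_union, Set.mem_Iio, Set.mem_Ioi,
      not_and_or, not_le]
  rw [hcompl]
  exact le_antisymm (le_trans (measure_union_le _ _) (by rw [hIio, hIoi]; simp))
    zero_le
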